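/- arXiv:2202.10626 — 3 statements merged into one kernel-verified Lean document; each statement's English description precedes it below -/
import Mathlib

section
/- Let G be a group, let G^φ be an isomorphic copy of G via an isomorphism φ, and let ν(G) be the quotient of the free product G ∗ G^φ by the normal subgroup generated by the relations [g₁, g₂^φ]^{g₃} = [g₁^{g₃}, (g₂^{g₃})^φ] = [g₁, g₂^φ]^{g₃^φ} for all g₁,g₂,g₃ ∈ G. Then for all g₁, g₂, g₃ ∈ G the following six elements of ν(G) are equal: [g₁^φ, g₂, g₃] = [g₁, g₂^φ, g₃] = [g₁, g₂, g₃^φ] = [g₁^φ, g₂^φ, g₃] = [g₁^φ, g₂, g₃^φ] = [g₁, g₂^φ, g₃^φ]. -/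
/-- The paper's commutator convention: `[x, y] = x⁻¹ * y⁻¹ * x * y`. -/
def cm {G : Type*} [Group G] (x y : G) : G := x⁻¹ * y⁻¹ * x * y

/-- Conjugation convention: `x ^ y = y⁻¹ * x * y`. -/
def cj {G : Type*} [Group G] (x y : G) : G := y⁻¹ * x * y

namespace Rocco

variable (G : Type*) [Group G]

/-- The defining relators of Rocco's group `ν(G)`, inside the free product `G ∗ G`
(the second factor playing the role of the isomorphic copy `G^φ`). -/
def rels : Set (Monoid.Coprod G G) :=
  {x | ∃ g₁ g₂ g₃ : G,
    x = cj (cm (Monoid.Coprod.inl g₁) (Monoid.Coprod.inr g₂)) (Monoid.Coprod.inl g₃) *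
        (cm (Monoid.Coprod.inl (cj g₁ g₃)) (Monoid.Coprod.inr (cj g₂ g₃)))⁻¹ ∨
    x = cj (cm (Monoid.Coprod.inl g₁) (Monoid.Coprod.inr g₂)) (Monoid.Coprod.inl g₃) *
        (cj (cm (Monoid.Coprod.inl g₁) (Monoid.Coprod.inr g₂)) (Monoid.Coprod.inr g₃))⁻¹}

/-- Rocco's construction `ν(G)`. -/
abbrev nu := Monoid.Coprod G G ⧸ Subgroup.normalClosure (rels G)

/-- The canonical image of `G` in `ν(G)`. -/
def ν₁ : G →* nu G := (QuotientGroup.mk' (Subgroup.normalClosure (rels G))).comp Monoid.Coprod.inl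

/-- The canonical image of the copy `G^φ` in `ν(G)`; `ν₂ g` plays the role of `g^φ`. -/
def ν₂ : G →* nu G := (QuotientGroup.mk' (Subgroup.normalClosure (rels G))).comp Monoid.Coprod.inr

end Rocco

/-! ### Pure group-theoretic identities for `cm` and `cj` -/

section Pure

variable {H : Type*} [Group H]

lemma cj_cj (m a b : H) : cj (cj m a) b = cj m (a * b) := by
  simp only [cj]; group

lemma cj_inv (m a : H) : cj m⁻¹ a = (cj m a)⁻¹ := by
  simp only [cj]; group

lemma cj_one (m : H) : cj m 1 = m := by simp [cj]

lemma cm_swap (x y : H) : (cm x y)⁻¹ = cm y x := by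
  simp only [cm]; group

lemma cm_eq_inv_mul_cj (x y : H) : cm x y = x⁻¹ * cj x y := by
  simp only [cm, cj]; group

lemma cm_mul_right (x y z : H) : cm x (y * z) = cm x z * cj (cm x y) z := by
  simp only [cm, cj]; group

lemma cm_mul_left (x y z : H) : cm (x * y) z = cj (cm x z) y * cm y z := by
  simp only [cm, cj]; group

lemma cm_one_left (y : H) : cm 1 y = 1 := by simp [cm]

variable {G : Type*} [Group G]

lemma map_cm (f : G →* H) (x y : G) : f (cm x y) = cm (f x) (f y) := by
  simp [cm]

lemma map_cj (f : G →* H) (x y : G) : f (cj x y) = cj (f x) (f y) := by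
  simp [cj]

lemma cj_cj_inv_self (x u : G) : cj (cj x u⁻¹) u = x := by
  rw [cj_cj, inv_mul_cancel, cj_one]

lemma cj_self_inv (u : G) : cj u⁻¹ u = u⁻¹ := by
  simp only [cj]; group

lemma cj_eq_mul_cm (g h : G) : cj g h = g * cm g h := by
  simp only [cj, cm]; group

end Pure

/-! ### Abstract derivation of Rocco's identities -/

section Abstract

variable {G H : Type*} [Group G] [Group H]

/-- First family of Rocco relations for a pair of homomorphisms. -/
def RH1 (A B : G →* H) : Prop :=
  ∀ u v z : G, cj (cm (A u) (B v)) (A z) = cm (A (cj u z)) (B (cj v z))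

/-- Second family of Rocco relations for a pair of homomorphisms. -/
def RH2 (A B : G →* H) : Prop :=
  ∀ u v z : G, cj (cm (A u) (B v)) (A z) = cj (cm (A u) (B v)) (B z)

variable {A B : G →* H}

lemma conjB (h1 : RH1 A B) (h2 : RH2 A B) (u v z : G) :
    cj (cm (A u) (B v)) (B z) = cm (A (cj u z)) (B (cj v z)) :=
  (h2 u v z).symm.trans (h1 u v z)

/-- Expansion in the second slot. -/
lemma lamP2 (h1 : RH1 A B) (h2 : RH2 A B) (u v w : G) :
    cm (A u) (B (v * w)) = cm (A u) (B w) * cm (A (cj u w)) (B (cj v w)) := by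
  rw [map_mul, cm_mul_right, conjB h1 h2]

/-- Expansion in the first slot. -/
lemma lamP1 (h1 : RH1 A B) (u v x : G) :
    cm (A (u * v)) (B x) = cm (A (cj u v)) (B (cj x v)) * cm (A v) (B x) := by
  rw [map_mul, cm_mul_left, h1]

/-- Conjugation of a generator by a generator is index-conjugation by the commutator. -/
lemma conjLam (h1 : RH1 A B) (h2 : RH2 A B) (p q u v : G) :
    cj (cm (A p) (B q)) (cm (A u) (B v)) =
      cm (A (cj p (cm u v))) (B (cj q (cm u v))) := by
  have expand : cm (A u) (B v) = (A u)⁻¹ * (B v)⁻¹ * (A u) * (B v) := rfl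
  rw [expand, ← cj_cj, ← cj_cj, ← cj_cj]
  rw [← map_inv A u, ← map_inv B v]
  rw [h1, conjB h1 h2, h1, conjB h1 h2]
  rw [cj_cj, cj_cj, cj_cj, cj_cj, cj_cj, cj_cj]
  have e : u⁻¹ * (v⁻¹ * (u * v)) = cm u v := by simp only [cm]; group
  rw [e]

lemma lamStar1 (h1 : RH1 A B) (h2 : RH2 A B) (g h x : G) :
    cm (A g) (B (h * x)) = cm (A g) (B h) * cm (A (cj g h)) (B x) := by
  have e : h * x = (cj x h⁻¹) * h := by simp only [cj]; group
  rw [e, lamP2 h1 h2, cj_cj_inv_self]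

lemma lamStar2 (h1 : RH1 A B) (h2 : RH2 A B) (g h x : G) :
    cm (A g) (B (h * x)) = cm (A g) (B x) * cm (A (cj g x)) (B (cj h x)) :=
  lamP2 h1 h2 g h x

lemma lamII (h1 : RH1 A B) (h2 : RH2 A B) (g h x : G) :
    cm (A (cj g h)) (B x) =
      (cm (A g) (B h))⁻¹ * (cm (A g) (B x) * cm (A (cj g x)) (B (cj h x))) := by
  have h' := (lamStar1 h1 h2 g h x).symm.trans (lamStar2 h1 h2 g h x)
  rw [← h']
  group

/-- The key identity: `λ([g,h], x) = λ(g,h)⁻¹ λ(gˣ, hˣ)`. -/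
lemma lamKey (h1 : RH1 A B) (h2 : RH2 A B) (g h x : G) :
    cm (A (cm g h)) (B x) =
      (cm (A g) (B h))⁻¹ * cm (A (cj g x)) (B (cj h x)) := by
  set k := cm g h with hk
  have p1 : cm (A (cj g h)) (B x)
      = cm (A (cj g k)) (B (cj x k)) * cm (A k) (B x) := by
    rw [cj_eq_mul_cm g h, ← hk, lamP1 h1]
  have p2 : cm (A (cj g k)) (B (cj x k))
      = (cm (A g) (B h))⁻¹ * (cm (A g) (B x) * cm (A g) (B h)) := by
    have hc := conjLam h1 h2 g x g h
    rw [← hk] at hc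
    rw [← hc]; simp only [cj]; group
  have p3 := lamII h1 h2 g h x
  rw [p2] at p1
  have h' := p1.symm.trans p3
  -- h' : a⁻¹ * (b * a) * λkx = a⁻¹ * (b * c)
  have h'' : cm (A g) (B h) * cm (A k) (B x)
      = cm (A (cj g x)) (B (cj h x)) := by
    have := congrArg (fun t => (cm (A g) (B x))⁻¹ * (cm (A g) (B h) * t)) h'
    simpa [mul_assoc] using this
  rw [← h'']
  group

/-- Inversion in the first slot. -/
lemma lamInv (h1 : RH1 A B) (u x : G) :
    cm (A u⁻¹) (B x) = (cm (A u) (B (cj x u⁻¹)))⁻¹ := by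
  have p := lamP1 h1 (u⁻¹) u (cj x u⁻¹)
  rw [inv_mul_cancel, map_one, cm_one_left, cj_self_inv, cj_cj_inv_self] at p
  exact eq_inv_of_mul_eq_one_left p.symm

/-- Invariance of `λ(g,h) λ(h,g)` under simultaneous conjugation of the indices. -/
lemma lamD (h1 : RH1 A B) (h2 : RH2 A B) (g h x : G) :
    cm (A (cj g x)) (B (cj h x)) * cm (A (cj h x)) (B (cj g x)) =
      cm (A g) (B h) * cm (A h) (B g) := by
  set k := cm g h with hk
  have hk' : cm h g = k⁻¹ := by rw [hk, cm_swap]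
  have e1 : cm (A (cj g x)) (B (cj h x)) = cm (A g) (B h) * cm (A k) (B x) := by
    have hkey := lamKey h1 h2 g h x
    rw [← hk] at hkey
    rw [hkey]
    group
  have e2 : cm (A (cj h x)) (B (cj g x)) = cm (A h) (B g) * cm (A k⁻¹) (B x) := by
    have hkey := lamKey h1 h2 h g x
    rw [hk'] at hkey
    rw [hkey]
    group
  rw [e1, e2]
  -- need : a * λkx * (b * λ(k⁻¹)x) = a * b
  have e3 : cm (A k⁻¹) (B x) = (cm (A k) (B (cj x k⁻¹)))⁻¹ := lamInv h1 k x
  have e4 : cj (cm (A k) (B x)) (cm (A h) (B g)) = cm (A k) (B (cj x k⁻¹)) := by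
    have := conjLam h1 h2 k x h g
    rw [hk'] at this
    rw [this]
    congr 1
    rw [hk]
    simp only [cj, cm]; group
  -- from e4 : λkx * b = b * λk(x^{k⁻¹})
  have e5 : cm (A k) (B x) * cm (A h) (B g)
      = cm (A h) (B g) * cm (A k) (B (cj x k⁻¹)) := by
    rw [← e4]; simp only [cj]; group
  calc cm (A g) (B h) * cm (A k) (B x) * (cm (A h) (B g) * cm (A k⁻¹) (B x))
      = cm (A g) (B h) * (cm (A k) (B x) * cm (A h) (B g)) * cm (A k⁻¹) (B x) := by
        group
    _ = cm (A g) (B h) * (cm (A h) (B g) * cm (A k) (B (cj x k⁻¹))) * cm (A k⁻¹) (B x) := by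
        rw [e5]
    _ = cm (A g) (B h) * cm (A h) (B g) := by
        rw [e3]; group

/-- `[g₁^φ, g₂, g₃] = [g₁, g₂^φ, g₃]` (abstract form). -/
lemma T1 (h1 : RH1 A B) (h2 : RH2 A B) (g₁ g₂ g₃ : G) :
    cm (cm (B g₁) (A g₂)) (A g₃) = cm (cm (A g₁) (B g₂)) (A g₃) := by
  rw [← cm_swap (A g₂) (B g₁)]
  rw [cm_eq_inv_mul_cj ((cm (A g₂) (B g₁))⁻¹) (A g₃), cj_inv, h1]
  rw [cm_eq_inv_mul_cj (cm (A g₁) (B g₂)) (A g₃), h1]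
  rw [inv_inv]
  -- goal : λ₂₁ * (λ(g₂³)(g₁³))⁻¹ = (λ₁₂)⁻¹ * λ(g₁³)(g₂³)
  have hd := lamD h1 h2 g₁ g₂ g₃
  -- hd : λ(g₁³)(g₂³) * λ(g₂³)(g₁³) = λ₁₂ * λ₂₁
  rw [eq_comm, inv_mul_eq_iff_eq_mul, ← mul_assoc, ← hd]
  group

/-- `[g₁, g₂^φ, g₃] = [g₁, g₂, g₃^φ]` (abstract form). -/
lemma T2 (h1 : RH1 A B) (h2 : RH2 A B) (g₁ g₂ g₃ : G) :
    cm (cm (A g₁) (B g₂)) (A g₃) = cm (cm (A g₁) (A g₂)) (B g₃) := by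
  rw [← map_cm A, lamKey h1 h2]
  rw [cm_eq_inv_mul_cj (cm (A g₁) (B g₂)) (A g₃), h1]

/-- `[g₁^φ, g₂, g₃] = [g₁^φ, g₂, g₃^φ]` (abstract form). -/
lemma T3 (h1 : RH1 A B) (h2 : RH2 A B) (g₁ g₂ g₃ : G) :
    cm (cm (B g₁) (A g₂)) (A g₃) = cm (cm (B g₁) (A g₂)) (B g₃) := by
  rw [← cm_swap (A g₂) (B g₁)]
  rw [cm_eq_inv_mul_cj ((cm (A g₂) (B g₁))⁻¹) (A g₃), cj_inv, h1]
  rw [cm_eq_inv_mul_cj ((cm (A g₂) (B g₁))⁻¹) (B g₃), cj_inv, conjB h1 h2]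

end Abstract

/-! ### The relations hold in `ν(G)` -/

namespace Rocco

variable {G : Type*} [Group G]

lemma rel_eq_one {x : Monoid.Coprod G G} (hx : x ∈ rels G) :
    (QuotientGroup.mk' (Subgroup.normalClosure (rels G))) x = 1 :=
  (QuotientGroup.eq_one_iff x).mpr (Subgroup.subset_normalClosure hx)

lemma nu_h1 : RH1 (ν₁ G) (ν₂ G) := by
  intro u v z
  have hx : (cj (cm (Monoid.Coprod.inl u) (Monoid.Coprod.inr v)) (Monoid.Coprod.inl z) *
      (cm (Monoid.Coprod.inl (cj u z)) (Monoid.Coprod.inr (cj v z)))⁻¹ : Monoid.Coprod G G)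
      ∈ rels G := ⟨u, v, z, Or.inl rfl⟩
  have h := rel_eq_one hx
  rw [map_mul, map_inv, mul_inv_eq_one] at h
  simp only [map_cj, map_cm] at h ⊢
  exact h

lemma nu_h2 : RH2 (ν₁ G) (ν₂ G) := by
  intro u v z
  have hx : (cj (cm (Monoid.Coprod.inl u) (Monoid.Coprod.inr v)) (Monoid.Coprod.inl z) *
      (cj (cm (Monoid.Coprod.inl u) (Monoid.Coprod.inr v)) (Monoid.Coprod.inr z))⁻¹ :
      Monoid.Coprod G G) ∈ rels G := ⟨u, v, z, Or.inr rfl⟩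
  have h := rel_eq_one hx
  rw [map_mul, map_inv, mul_inv_eq_one] at h
  simp only [map_cj, map_cm] at h ⊢
  exact h

lemma nu_h1' : RH1 (ν₂ G) (ν₁ G) := by
  intro u v z
  rw [← cm_swap (ν₁ G v) (ν₂ G u), cj_inv, conjB (nu_h1) (nu_h2),
    cm_swap (ν₁ G (cj v z)) (ν₂ G (cj u z))]

lemma nu_h2' : RH2 (ν₂ G) (ν₁ G) := by
  intro u v z
  rw [← cm_swap (ν₁ G v) (ν₂ G u), cj_inv, cj_inv, conjB (nu_h1) (nu_h2), nu_h1]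

end Rocco

open Rocco in
/-- In `ν(G)` the six mixed triple commutators coincide. -/
theorem six_triple_commutators_eq {G : Type*} [Group G] (g₁ g₂ g₃ : G) :
    cm (cm (ν₂ G g₁) (ν₁ G g₂)) (ν₁ G g₃) = cm (cm (ν₁ G g₁) (ν₂ G g₂)) (ν₁ G g₃) ∧
    cm (cm (ν₁ G g₁) (ν₂ G g₂)) (ν₁ G g₃) = cm (cm (ν₁ G g₁) (ν₁ G g₂)) (ν₂ G g₃) ∧
    cm (cm (ν₁ G g₁) (ν₁ G g₂)) (ν₂ G g₃) = cm (cm (ν₂ G g₁) (ν₂ G g₂)) (ν₁ G g₃) ∧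
    cm (cm (ν₂ G g₁) (ν₂ G g₂)) (ν₁ G g₃) = cm (cm (ν₂ G g₁) (ν₁ G g₂)) (ν₂ G g₃) ∧
    cm (cm (ν₂ G g₁) (ν₁ G g₂)) (ν₂ G g₃) = cm (cm (ν₁ G g₁) (ν₂ G g₂)) (ν₂ G g₃) := by
  have h1 := (nu_h1 : RH1 (ν₁ G) (ν₂ G))
  have h2 := (nu_h2 : RH2 (ν₁ G) (ν₂ G))
  have h1' := (nu_h1' : RH1 (ν₂ G) (ν₁ G))
  have h2' := (nu_h2' : RH2 (ν₂ G) (ν₁ G))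
  have e1 := T1 h1 h2 g₁ g₂ g₃
  have e2 := T2 h1 h2 g₁ g₂ g₃
  have e3 := T3 h1 h2 g₁ g₂ g₃
  have e2' := T2 h1' h2' g₁ g₂ g₃
  have e1' := T1 h1' h2' g₁ g₂ g₃
  refine ⟨e1, e2, ?_, e2'.symm, e1'.symm⟩
  calc cm (cm (ν₁ G g₁) (ν₁ G g₂)) (ν₂ G g₃)
      = cm (cm (ν₁ G g₁) (ν₂ G g₂)) (ν₁ G g₃) := e2.symm
    _ = cm (cm (ν₂ G g₁) (ν₁ G g₂)) (ν₁ G g₃) := e1.symm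
    _ = cm (cm (ν₂ G g₁) (ν₁ G g₂)) (ν₂ G g₃) := e3
    _ = cm (cm (ν₂ G g₁) (ν₂ G g₂)) (ν₁ G g₃) := e2'
end

section
/- Let G be a finite group. Then Rocco's group ν(G) is finite. -/
namespace RoccoProof

open Rocco Subgroup
open scoped commutatorElement

variable {G : Type*} [Group G]

/-! ### Elementary `cm`/`cj` identities -/

@[simp] lemma cj_one_right (x : G) : cj x 1 = x := by unfold cj; group

@[simp] lemma cj_one_left (a : G) : cj (1 : G) a = 1 := by unfold cj; group

lemma cj_mul_right (x a b : G) : cj x (a * b) = cj (cj x a) b := by unfold cj; group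

lemma cj_mul_left (x y a : G) : cj (x * y) a = cj x a * cj y a := by unfold cj; group

lemma cj_inv_left (x a : G) : cj x⁻¹ a = (cj x a)⁻¹ := by unfold cj; group

@[simp] lemma cm_one_left (y : G) : cm 1 y = 1 := by unfold cm; group

@[simp] lemma cm_one_right (x : G) : cm x 1 = 1 := by unfold cm; group

lemma cj_cm (g₁ g₂ g₃ : G) : cj (cm g₁ g₂) g₃ = cm (cj g₁ g₃) (cj g₂ g₃) := by
  unfold cm cj; group

lemma cj_eq_mul_cm (g k : G) : cj g k = g * cm g k := by unfold cj cm; group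

lemma cm_mul_left (x x' y : G) : cm (x * x') y = cj (cm x y) x' * cm x' y := by
  unfold cm cj; group

lemma cm_mul_right (x y y' : G) : cm x (y * y') = cm x y' * cj (cm x y) y' := by
  unfold cm cj; group

lemma map_cj {H : Type*} [Group H] (f : G →* H) (x a : G) :
    f (cj x a) = cj (f x) (f a) := by simp [cj]

lemma map_cm {H : Type*} [Group H] (f : G →* H) (x y : G) :
    f (cm x y) = cm (f x) (f y) := by simp [cm]

/-! ### The defining relations in `ν(G)` -/

lemma mk_rels_eq_one {x : Monoid.Coprod G G} (hx : x ∈ rels G) :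
    QuotientGroup.mk' (normalClosure (rels G)) x = 1 :=
  (QuotientGroup.eq_one_iff x).2 (subset_normalClosure hx)

/-- The generators `[ν₁ g, ν₂ h]` of the subgroup `Δ`. -/
def cc (g h : G) : nu G := cm (ν₁ G g) (ν₂ G h)

lemma rel1 (g₁ g₂ g₃ : G) :
    cj (cc g₁ g₂) (ν₁ G g₃) = cc (cj g₁ g₃) (cj g₂ g₃) := by
  have h : (cj (cm (Monoid.Coprod.inl g₁) (Monoid.Coprod.inr g₂)) (Monoid.Coprod.inl g₃) *
      (cm (Monoid.Coprod.inl (cj g₁ g₃)) (Monoid.Coprod.inr (cj g₂ g₃)))⁻¹ :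
      Monoid.Coprod G G) ∈ rels G := ⟨g₁, g₂, g₃, Or.inl rfl⟩
  have h2 := mk_rels_eq_one h
  rw [map_mul, map_inv, map_cj, map_cm, map_cm, mul_inv_eq_one] at h2
  exact h2

lemma rel2 (g₁ g₂ g₃ : G) :
    cj (cc g₁ g₂) (ν₁ G g₃) = cj (cc g₁ g₂) (ν₂ G g₃) := by
  have h : (cj (cm (Monoid.Coprod.inl g₁) (Monoid.Coprod.inr g₂)) (Monoid.Coprod.inl g₃) *
      (cj (cm (Monoid.Coprod.inl g₁) (Monoid.Coprod.inr g₂)) (Monoid.Coprod.inr g₃))⁻¹ :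
      Monoid.Coprod G G) ∈ rels G := ⟨g₁, g₂, g₃, Or.inr rfl⟩
  have h2 := mk_rels_eq_one h
  rw [map_mul, map_inv, map_cj, map_cj, map_cm, mul_inv_eq_one] at h2
  exact h2

/-! ### The subgroup `Δ = [ν₁(G), ν₂(G)]` -/

variable (G) in
/-- The subgroup of `ν(G)` generated by the commutators `[ν₁ g, ν₂ h]`. -/
def DD : Subgroup (nu G) := closure (Set.range fun p : G × G => cc p.1 p.2)

lemma memD (g h : G) : cc g h ∈ DD G := subset_closure ⟨(g, h), rfl⟩

lemma conj1_mem (k : G) {x : nu G} (hx : x ∈ DD G) : cj x (ν₁ G k) ∈ DD G := by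
  have hx' : x ∈ closure (Set.range fun p : G × G => cc p.1 p.2) := hx
  clear hx
  induction hx' using closure_induction with
  | mem x hx => obtain ⟨⟨g, h⟩, rfl⟩ := hx; rw [rel1]; exact memD _ _
  | one => simpa using (DD G).one_mem
  | mul x y hx hy px py => rw [cj_mul_left]; exact mul_mem px py
  | inv x hx px => rw [cj_inv_left]; exact inv_mem px

lemma conj_eq12 {x : nu G} (hx : x ∈ DD G) (k : G) :
    cj x (ν₁ G k) = cj x (ν₂ G k) := by
  have hx' : x ∈ closure (Set.range fun p : G × G => cc p.1 p.2) := hx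
  clear hx
  induction hx' using closure_induction with
  | mem x hx => obtain ⟨⟨g, h⟩, rfl⟩ := hx; exact rel2 g h k
  | one => simp
  | mul x y hx hy px py => rw [cj_mul_left, cj_mul_left, px, py]
  | inv x hx px => rw [cj_inv_left, cj_inv_left, px]

lemma conj2_mem (k : G) {x : nu G} (hx : x ∈ DD G) : cj x (ν₂ G k) ∈ DD G := by
  rw [← conj_eq12 hx k]; exact conj1_mem k hx

lemma top_eq :
    closure (Set.range (ν₁ G) ∪ Set.range (ν₂ G)) = (⊤ : Subgroup (nu G)) := by
  rw [eq_top_iff']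
  intro x
  obtain ⟨y, rfl⟩ := QuotientGroup.mk'_surjective (normalClosure (rels G)) x
  induction y using Monoid.Coprod.induction_on with
  | inl m => exact subset_closure (Or.inl ⟨m, rfl⟩)
  | inr n => exact subset_closure (Or.inr ⟨n, rfl⟩)
  | mul x y hx hy => rw [map_mul]; exact mul_mem hx hy

lemma conj_mem_D (n : nu G) {x : nu G} (hx : x ∈ DD G) : cj x n ∈ DD G := by
  have hn : n ∈ closure (Set.range (ν₁ G) ∪ Set.range (ν₂ G)) := by
    rw [top_eq]; trivial
  have key : ∀ y ∈ DD G, cj y n ∈ DD G ∧ cj y n⁻¹ ∈ DD G := by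
    clear hx
    induction hn using closure_induction with
    | mem a ha =>
      intro y hy
      rcases ha with ⟨k, rfl⟩ | ⟨k, rfl⟩
      · exact ⟨conj1_mem k hy, by rw [← map_inv]; exact conj1_mem k⁻¹ hy⟩
      · exact ⟨conj2_mem k hy, by rw [← map_inv]; exact conj2_mem k⁻¹ hy⟩
    | one => intro y hy; simpa using hy
    | mul a b ha hb pa pb =>
      intro y hy
      constructor
      · rw [cj_mul_right]; exact (pb _ (pa y hy).1).1
      · rw [mul_inv_rev, cj_mul_right]; exact (pa _ (pb y hy).2).2
    | inv a ha pa =>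
      intro y hy
      exact ⟨(pa y hy).2, by rw [inv_inv]; exact (pa y hy).1⟩
  exact (key x hx).1

instance : (DD G).Normal := by
  constructor
  intro x hx g
  have h := conj_mem_D g⁻¹ hx
  simpa [cj] using h

/-! ### The retraction `ρ : ν(G) → G` -/

variable (G) in
/-- The homomorphism `ν(G) → G` sending both `ν₁ g` and `ν₂ g` to `g`. -/
def ρ : nu G →* G := by
  refine QuotientGroup.lift _ (Monoid.Coprod.lift (MonoidHom.id G) (MonoidHom.id G)) ?_
  intro x hx
  have hsub : rels G ⊆ ((Monoid.Coprod.lift (MonoidHom.id G) (MonoidHom.id G)).ker : Set _) := by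
    rintro r ⟨g₁, g₂, g₃, h | h⟩ <;> subst h <;>
      simp only [SetLike.mem_coe, MonoidHom.mem_ker, map_mul, map_inv, map_cj, map_cm,
        Monoid.Coprod.lift_apply_inl, Monoid.Coprod.lift_apply_inr, MonoidHom.id_apply]
    · rw [cj_cm, mul_inv_cancel]
    · rw [mul_inv_cancel]
  exact normalClosure_le_normal hsub hx

@[simp] lemma ρ_ν₁ (g : G) : ρ G (ν₁ G g) = g := rfl

@[simp] lemma ρ_ν₂ (g : G) : ρ G (ν₂ G g) = g := rfl

lemma ρ_cc (a b : G) : ρ G (cc a b) = cm a b := by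
  unfold cc; rw [map_cm, ρ_ν₁, ρ_ν₂]

/-- Conjugation by an element of `Δ` acts on `Δ` like conjugation by `ν₁` of its
retraction to `G`. -/
lemma conj_D_eq {d : nu G} (hd : d ∈ DD G) :
    ∀ x ∈ DD G, cj x d = cj x (ν₁ G (ρ G d)) := by
  have hd' : d ∈ closure (Set.range fun p : G × G => cc p.1 p.2) := hd
  clear hd
  induction hd' using closure_induction with
  | mem a ha =>
    obtain ⟨⟨g, h⟩, rfl⟩ := ha
    intro x hx
    show cj x (cc g h) = cj x (ν₁ G (ρ G (cc g h)))
    rw [ρ_cc]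
    have e : cc g h = ν₁ G g⁻¹ * (ν₂ G h⁻¹ * (ν₁ G g * ν₂ G h)) := by
      unfold cc cm; rw [map_inv, map_inv]; group
    have e' : cm g h = g⁻¹ * (h⁻¹ * (g * h)) := by unfold cm; group
    have m1 : cj x (ν₁ G g⁻¹) ∈ DD G := conj1_mem _ hx
    have m3 : cj (cj (cj x (ν₁ G g⁻¹)) (ν₁ G h⁻¹)) (ν₁ G g) ∈ DD G :=
      conj1_mem _ (conj1_mem _ m1)
    rw [e, e', cj_mul_right, cj_mul_right, cj_mul_right, ← conj_eq12 m1 h⁻¹,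
      ← conj_eq12 m3 h, map_mul (ν₁ G), map_mul (ν₁ G), map_mul (ν₁ G),
      cj_mul_right, cj_mul_right, cj_mul_right]
  | one => intro x hx; simp
  | mul a b ha hb pa pb =>
    intro x hx
    calc cj x (a * b) = cj (cj x a) b := cj_mul_right x a b
      _ = cj (cj x a) (ν₁ G (ρ G b)) := pb _ (conj_mem_D a hx)
      _ = cj (cj x (ν₁ G (ρ G a))) (ν₁ G (ρ G b)) := by rw [pa x hx]
      _ = cj x (ν₁ G (ρ G a) * ν₁ G (ρ G b)) := (cj_mul_right _ _ _).symm
      _ = cj x (ν₁ G (ρ G (a * b))) := by rw [← map_mul, ← map_mul]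
  | inv a ha pa =>
    intro x hx
    have hy : cj x (ν₁ G (ρ G a⁻¹)) ∈ DD G := conj_mem_D _ hx
    have h1 : cj (cj x (ν₁ G (ρ G a⁻¹))) a = x := by
      rw [pa _ hy, ← cj_mul_right, ← map_mul, ← map_mul, inv_mul_cancel, map_one, map_one,
        cj_one_right]
    calc cj x a⁻¹ = cj (cj (cj x (ν₁ G (ρ G a⁻¹))) a) a⁻¹ := by rw [h1]
      _ = cj x (ν₁ G (ρ G a⁻¹)) := by rw [← cj_mul_right, mul_inv_cancel, cj_one_right]

/-! ### Abelianization of `Δ` and the induced conjugation maps -/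

variable (G) in
/-- Conjugation by an arbitrary element of `ν(G)` as an endomorphism of `Δ`. -/
def conjHom (k : nu G) : ↥(DD G) →* ↥(DD G) where
  toFun x := ⟨cj x.1 k, conj_mem_D k x.2⟩
  map_one' := by ext; simp
  map_mul' x y := by ext; simp [cj_mul_left]

lemma conjHom_apply (k : nu G) (x : ↥(DD G)) : (conjHom G k x : nu G) = cj x.1 k := rfl

variable (G) in
/-- Conjugation by `k` as an endomorphism of the abelianization of `Δ`. -/
def Amap (k : nu G) : Abelianization ↥(DD G) →* Abelianization ↥(DD G) :=
  Abelianization.map (conjHom G k)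

lemma Amap_of (k : nu G) (x : ↥(DD G)) :
    Amap G k (Abelianization.of x) = Abelianization.of (conjHom G k x) := rfl

lemma of_surj :
    Function.Surjective (Abelianization.of : ↥(DD G) → Abelianization ↥(DD G)) :=
  fun t => QuotientGroup.induction_on t fun z => ⟨z, rfl⟩

/-- The generators of the abelianization of `Δ`. -/
def TT (g h : G) : Abelianization ↥(DD G) := Abelianization.of ⟨cc g h, memD g h⟩

lemma Amap_mul (w w' : nu G) (t : Abelianization ↥(DD G)) :
    Amap G (w * w') t = Amap G w' (Amap G w t) := by
  obtain ⟨x, rfl⟩ := of_surj t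
  rw [Amap_of, Amap_of, Amap_of]
  congr 1
  ext
  simp [conjHom_apply, cj_mul_right]

/-- `w` acts trivially on the abelianization of `Δ`. -/
def triv (w : nu G) : Prop := ∀ t : Abelianization ↥(DD G), Amap G w t = t

lemma triv_one : triv (1 : nu G) := by
  intro t
  obtain ⟨x, rfl⟩ := of_surj t
  rw [Amap_of]
  congr 1
  ext
  simp [conjHom_apply]

lemma triv_mul {w w' : nu G} (h : triv w) (h' : triv w') : triv (w * w') := by
  intro t; rw [Amap_mul, h, h']

lemma triv_pow {w : nu G} (h : triv w) : ∀ m : ℕ, triv (w ^ m) := by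
  intro m
  induction m with
  | zero => simpa using triv_one
  | succ m ih => rw [pow_succ]; exact triv_mul ih h

lemma triv_of_mem {d : nu G} (hd : d ∈ DD G) : triv d := by
  intro t
  obtain ⟨x, rfl⟩ := of_surj t
  rw [Amap_of]
  have hrw : conjHom G d x = (⟨d, hd⟩ : ↥(DD G))⁻¹ * x * ⟨d, hd⟩ := by
    ext; simp [conjHom_apply, cj]
  rw [hrw, map_mul, map_mul, map_inv,
    mul_comm ((Abelianization.of (⟨d, hd⟩ : ↥(DD G)))⁻¹) (Abelianization.of x),
    mul_assoc, inv_mul_cancel, mul_one]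

lemma triv_nu_cm (a b : G) : triv (ν₁ G (cm a b)) := by
  intro t
  obtain ⟨x, rfl⟩ := of_surj t
  rw [Amap_of]
  have h1 : conjHom G (ν₁ G (cm a b)) x = conjHom G (cc a b) x := by
    ext
    rw [conjHom_apply, conjHom_apply, ← ρ_cc, ← conj_D_eq (memD a b) x.1 x.2]
  rw [h1, ← Amap_of]
  exact triv_of_mem (memD a b) _

lemma Amap_TT (k g h : G) :
    Amap G (ν₁ G k) (TT g h) = TT (cj g k) (cj h k) := by
  unfold TT
  rw [Amap_of]
  congr 1
  ext
  rw [conjHom_apply]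
  exact rel1 g h k

/-! ### The fundamental identities for the generators `TT` -/

lemma TT_mul_left (g g' h : G) :
    TT (g * g') h = TT (cj g g') (cj h g') * TT g' h := by
  have hc : cc (g * g') h = cc (cj g g') (cj h g') * cc g' h := by
    show cm (ν₁ G (g * g')) (ν₂ G h) = _
    rw [map_mul, cm_mul_left]
    rw [show cj (cm (ν₁ G g) (ν₂ G h)) (ν₁ G g') = cc (cj g g') (cj h g') from rel1 g h g']
    rfl
  unfold TT
  rw [← map_mul]
  congr 1
  exact Subtype.ext hc

lemma TT_mul_right (g h h' : G) :
    TT g (h * h') = TT g h' * TT (cj g h') (cj h h') := by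
  have hc : cc g (h * h') = cc g h' * cc (cj g h') (cj h h') := by
    show cm (ν₁ G g) (ν₂ G (h * h')) = _
    rw [map_mul, cm_mul_right]
    rw [show cj (cm (ν₁ G g) (ν₂ G h)) (ν₂ G h') = cc (cj g h') (cj h h') from
      (rel2 g h h').symm.trans (rel1 g h h')]
    rfl
  unfold TT
  rw [← map_mul]
  congr 1
  exact Subtype.ext hc

lemma TT_one_left (h : G) : TT (1 : G) h = 1 := by
  have : (⟨cc 1 h, memD 1 h⟩ : ↥(DD G)) = 1 := by
    ext
    show cc 1 h = 1
    unfold cc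
    rw [map_one, cm_one_left]
  unfold TT
  rw [this, map_one]

lemma TT_pow_left (x h : G) (ht : triv (ν₁ G x)) :
    ∀ m : ℕ, TT (x ^ m) h = TT x h ^ m := by
  intro m
  induction m with
  | zero => rw [pow_zero, pow_zero, TT_one_left]
  | succ m ih =>
    have htm : triv (ν₁ G (x ^ m)) := by rw [map_pow]; exact triv_pow ht m
    rw [pow_succ', TT_mul_left, ← Amap_TT, htm, ih, pow_succ']

lemma TT_pow_right (x g : G) (ht : triv (ν₁ G x)) :
    ∀ m : ℕ, TT g (x ^ m) = TT g x ^ m := by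
  intro m
  induction m with
  | zero =>
    rw [pow_zero, pow_zero]
    have : (⟨cc g 1, memD g 1⟩ : ↥(DD G)) = 1 := by
      ext
      show cc g 1 = 1
      unfold cc
      rw [map_one, cm_one_right]
    unfold TT
    rw [this, map_one]
  | succ m ih =>
    have htm : triv (ν₁ G (x ^ m)) := by rw [map_pow]; exact triv_pow ht m
    rw [pow_succ', TT_mul_right, ← Amap_TT, htm, ih, pow_succ, mul_comm]

/-! ### Torsion of the generators (needs `G` finite) -/

section Fin

set_option linter.unusedSectionVars false

variable [Finite G]

lemma torsion_left (a b h : G) : TT (cm a b) h ^ Nat.card G = 1 := by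
  rw [← TT_pow_left (cm a b) h (triv_nu_cm a b), pow_card_eq_one', TT_one_left]

lemma torsion_right (g a b : G) : TT g (cm a b) ^ Nat.card G = 1 := by
  have h := TT_pow_right (cm a b) g (triv_nu_cm a b) (Nat.card G)
  rw [pow_card_eq_one'] at h
  rw [← h]
  have : (⟨cc g 1, memD g 1⟩ : ↥(DD G)) = 1 := by
    ext
    show cc g 1 = 1
    unfold cc
    rw [map_one, cm_one_right]
  unfold TT
  rw [this, map_one]

lemma conj_pow_eq (g h k : G) :
    TT (cj g k) (cj h k) ^ Nat.card G = TT g h ^ Nat.card G := by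
  have key : TT (cj g k) (cj h k) =
      (TT g (cm h k) * TT g h) * TT (cm g k) (h * cm h k) := by
    rw [cj_eq_mul_cm g k, cj_eq_mul_cm h k]
    rw [TT_mul_left g (cm g k) (h * cm h k), ← Amap_TT, triv_nu_cm g k]
    rw [TT_mul_right g h (cm h k), ← Amap_TT, triv_nu_cm h k]
  rw [key, mul_pow, mul_pow, torsion_right g h k, torsion_left g k (h * cm h k),
    one_mul, mul_one]

lemma S_add (g g' h : G) :
    TT (g * g') h ^ Nat.card G = TT g h ^ Nat.card G * TT g' h ^ Nat.card G := by
  rw [TT_mul_left, mul_pow, conj_pow_eq g h g']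

lemma S_pow (g h : G) :
    ∀ m : ℕ, TT (g ^ m) h ^ Nat.card G = (TT g h ^ Nat.card G) ^ m := by
  intro m
  induction m with
  | zero => rw [pow_zero, pow_zero, TT_one_left, one_pow]
  | succ m ih => rw [pow_succ', S_add, ih, pow_succ', mul_right_cancel_iff]

lemma gen_exp (g h : G) : TT g h ^ (Nat.card G * Nat.card G) = 1 := by
  have h1 := S_pow g h (Nat.card G)
  rw [pow_card_eq_one', TT_one_left, one_pow, ← pow_mul, mul_comm] at h1
  exact h1.symm

lemma all_exp (t : Abelianization ↥(DD G)) :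
    t ^ (Nat.card G * Nat.card G) = 1 := by
  obtain ⟨⟨v, hv⟩, rfl⟩ := of_surj t
  induction hv using closure_induction with
  | mem a ha =>
    obtain ⟨⟨g, h⟩, rfl⟩ := ha
    exact gen_exp g h
  | one =>
    have h1 : Abelianization.of (1 : ↥(DD G)) ^ (Nat.card G * Nat.card G) = 1 := by
      rw [map_one, one_pow]
    exact h1
  | mul a b ha hb pa pb =>
    have h1 : Abelianization.of ((⟨a, ha⟩ : ↥(DD G)) * ⟨b, hb⟩) ^
        (Nat.card G * Nat.card G) = 1 := by
      rw [map_mul, mul_pow, pa, pb, one_mul]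
    exact h1
  | inv a ha pa =>
    have h1 : Abelianization.of ((⟨a, ha⟩ : ↥(DD G))⁻¹) ^
        (Nat.card G * Nat.card G) = 1 := by
      rw [map_inv, inv_pow, pa, inv_one]
    exact h1

end Fin

/-! ### Finiteness of the commutator set of a group with finite-index centre -/

lemma comm_central_left {H : Type*} [Group H] (a b z : H)
    (hz : ∀ g : H, g * z = z * g) : ⁅a * z, b⁆ = ⁅a, b⁆ := by
  rw [commutatorElement_def, commutatorElement_def, mul_inv_rev]
  calc a * z * b * (z⁻¹ * a⁻¹) * b⁻¹ = a * (z * b) * (z⁻¹ * a⁻¹) * b⁻¹ := by group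
    _ = a * (b * z) * (z⁻¹ * a⁻¹) * b⁻¹ := by rw [← hz b]
    _ = a * b * a⁻¹ * b⁻¹ := by group

lemma comm_central_right {H : Type*} [Group H] (a b w : H)
    (hw : ∀ g : H, g * w = w * g) : ⁅a, b * w⁆ = ⁅a, b⁆ := by
  rw [commutatorElement_def, commutatorElement_def, mul_inv_rev]
  calc a * (b * w) * a⁻¹ * (w⁻¹ * b⁻¹) = a * b * (w * a⁻¹) * (w⁻¹ * b⁻¹) := by group
    _ = a * b * (a⁻¹ * w) * (w⁻¹ * b⁻¹) := by rw [← hw a⁻¹]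
    _ = a * b * a⁻¹ * b⁻¹ := by group

lemma finite_commutatorSet_of_center (H : Type*) [Group H]
    [(center H).FiniteIndex] : Finite (commutatorSet H) := by
  have key : ∀ a b : H,
      ⁅a, b⁆ = ⁅((a : H ⧸ center H)).out, ((b : H ⧸ center H)).out⁆ := by
    intro a b
    obtain ⟨z, hz⟩ := QuotientGroup.mk_out_eq_mul (center H) a
    obtain ⟨w, hw⟩ := QuotientGroup.mk_out_eq_mul (center H) b
    rw [hz, hw, comm_central_left _ _ _ (fun g => mem_center_iff.mp z.2 g),
      comm_central_right _ _ _ (fun g => mem_center_iff.mp w.2 g)]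
  have hsub : commutatorSet H ⊆
      Set.range (fun p : (H ⧸ center H) × (H ⧸ center H) => ⁅p.1.out, p.2.out⁆) := by
    rintro x ⟨a, b, rfl⟩
    exact ⟨(a, b), (key a b).symm⟩
  exact ((Set.finite_range _).subset hsub).to_subtype


/-! ### Assembly -/

lemma commute_of_cm_eq_one {H : Type*} [Group H] {x y : H} (h : cm x y = 1) :
    Commute x y := by
  have e : cm x y = (y * x)⁻¹ * (x * y) := by unfold cm; group
  rw [e, inv_mul_eq_one] at h
  exact h.symm

theorem main (G : Type*) [Group G] [Finite G] : Finite (nu G) := by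
  classical
  -- `Δ` is finitely generated
  haveI : Finite ↥(Set.range fun p : G × G => cc p.1 p.2) :=
    (Set.finite_range _).to_subtype
  haveI hFG : Group.FG ↥(DD G) := Group.closure_finite_fg _
  -- the centre of `Δ` has finite index
  let ρ' : ↥(DD G) →* G := (ρ G).comp (DD G).subtype
  have hker : ρ'.ker ≤ center ↥(DD G) := by
    intro z hz
    have hz1 : ρ G (z : nu G) = 1 := hz
    rw [mem_center_iff]
    intro x
    have h1 : cj (x : nu G) (z : nu G) = (x : nu G) := by
      rw [conj_D_eq z.2 (x : nu G) x.2, hz1, map_one, cj_one_right]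
    have h2 : (z : nu G)⁻¹ * (x : nu G) * (z : nu G) = (x : nu G) := h1
    ext
    have h3 := congrArg (fun w => (z : nu G) * w) h2
    simpa [mul_assoc] using h3
  haveI : Finite (↥(DD G) ⧸ ρ'.ker) :=
    Finite.of_equiv _ (QuotientGroup.quotientKerEquivRange ρ').symm.toEquiv
  haveI : ρ'.ker.FiniteIndex := Subgroup.finiteIndex_of_finite_quotient
  haveI : (center ↥(DD G)).FiniteIndex := Subgroup.finiteIndex_of_le hker
  -- Schur: the commutator subgroup of `Δ` is finite
  haveI : Finite (commutatorSet ↥(DD G)) := finite_commutatorSet_of_center _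
  haveI hcf : Finite (commutator ↥(DD G)) := inferInstance
  -- the abelianization of `Δ` is finite
  haveI : Group.FG (Abelianization ↥(DD G)) :=
    Group.fg_of_surjective (f := Abelianization.of) of_surj
  have htor : Monoid.IsTorsion (Abelianization ↥(DD G)) := by
    intro t
    refine isOfFinOrder_iff_pow_eq_one.2 ⟨Nat.card G * Nat.card G, ?_, all_exp t⟩
    have hpos : 0 < Nat.card G := Nat.card_pos
    positivity
  haveI hAbF : Finite (Abelianization ↥(DD G)) := CommGroup.finite_of_fg_torsion _ htor
  -- hence `Δ` itself is finite
  haveI : Finite (↥(DD G) ⧸ commutator ↥(DD G)) := hAbF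
  haveI : Finite ↥(DD G) :=
    Finite.of_equiv _ (Subgroup.groupEquivQuotientProdSubgroup
      (s := commutator ↥(DD G))).symm
  -- the quotient `ν(G)/Δ` is finite (it is an image of `G × G`)
  have hcomm : ∀ a b : G, Commute ((QuotientGroup.mk' (DD G)).comp (ν₁ G) a)
      ((QuotientGroup.mk' (DD G)).comp (ν₂ G) b) := by
    intro a b
    have h1 : (QuotientGroup.mk' (DD G)) (cc a b) = 1 :=
      (QuotientGroup.eq_one_iff _).2 (memD a b)
    rw [show cc a b = cm (ν₁ G a) (ν₂ G b) from rfl, map_cm] at h1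
    exact commute_of_cm_eq_one h1
  let ψ : G × G →* nu G ⧸ DD G :=
    MonoidHom.noncommCoprod ((QuotientGroup.mk' (DD G)).comp (ν₁ G))
      ((QuotientGroup.mk' (DD G)).comp (ν₂ G)) hcomm
  have hψ₁ : ∀ k : G, ψ (k, 1) = QuotientGroup.mk' (DD G) (ν₁ G k) := by
    intro k
    show QuotientGroup.mk' (DD G) (ν₁ G k) * QuotientGroup.mk' (DD G) (ν₂ G 1) = _
    rw [map_one, map_one, mul_one]
  have hψ₂ : ∀ k : G, ψ (1, k) = QuotientGroup.mk' (DD G) (ν₂ G k) := by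
    intro k
    show QuotientGroup.mk' (DD G) (ν₁ G 1) * QuotientGroup.mk' (DD G) (ν₂ G k) = _
    rw [map_one, map_one, one_mul]
  have hsurj : Function.Surjective ψ := by
    intro q
    obtain ⟨x, rfl⟩ := QuotientGroup.mk'_surjective (DD G) q
    have hx : x ∈ closure (Set.range (ν₁ G) ∪ Set.range (ν₂ G)) := by
      rw [top_eq]; trivial
    induction hx using closure_induction with
    | mem a ha =>
      rcases ha with ⟨k, rfl⟩ | ⟨k, rfl⟩
      · exact ⟨(k, 1), hψ₁ k⟩
      · exact ⟨(1, k), hψ₂ k⟩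
    | one => exact ⟨1, by rw [map_one, map_one]⟩
    | mul a b ha hb pa pb =>
      obtain ⟨u, hu⟩ := pa
      obtain ⟨v, hv⟩ := pb
      exact ⟨u * v, by rw [map_mul, hu, hv, map_mul]⟩
    | inv a ha pa =>
      obtain ⟨u, hu⟩ := pa
      exact ⟨u⁻¹, by rw [map_inv, hu, map_inv]⟩
  haveI : Finite (nu G ⧸ DD G) := Finite.of_surjective ψ hsurj
  exact Finite.of_equiv _ (Subgroup.groupEquivQuotientProdSubgroup (s := DD G)).symm


end RoccoProof

open Rocco in
theorem nu_finite (G : Type*) [Group G] [Finite G] : Finite (nu G) :=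
  RoccoProof.main G
end

section
/- Let G be a finite p-group of nilpotency class c. Then Rocco's group ν(G) is a finite p-group of nilpotency class at most c + 1. -/
namespace RoccoProof

open Rocco Subgroup
open scoped commutatorElement

variable {G : Type*} [Group G]

/-- The images of the two copies generate `ν(G)`. -/
lemma mem_of_gen (P : Subgroup (nu G)) (h1 : ∀ a, ν₁ G a ∈ P) (h2 : ∀ a, ν₂ G a ∈ P)
    (x : nu G) : x ∈ P := by
  obtain ⟨y, rfl⟩ := QuotientGroup.mk'_surjective (Subgroup.normalClosure (rels G)) x
  induction y using Monoid.Coprod.induction_on with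
  | inl m => exact h1 m
  | inr m => exact h2 m
  | mul x y hx hy => rw [map_mul]; exact P.mul_mem hx hy

private lemma rel_one {r : Monoid.Coprod G G} (hr : r ∈ rels G) :
    QuotientGroup.mk' (Subgroup.normalClosure (rels G)) r = 1 :=
  (QuotientGroup.eq_one_iff r).mpr (Subgroup.subset_normalClosure hr)

lemma eq1 (a b g : G) :
    ν₁ G g * ⁅ν₁ G a, ν₂ G b⁆ * (ν₁ G g)⁻¹ = ⁅ν₁ G (g*a*g⁻¹), ν₂ G (g*b*g⁻¹)⁆ := by
  have h := rel_one (G := G) (r := cj (cm (Monoid.Coprod.inl a⁻¹) (Monoid.Coprod.inr b⁻¹))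
      (Monoid.Coprod.inl g⁻¹) *
      (cm (Monoid.Coprod.inl (cj a⁻¹ g⁻¹)) (Monoid.Coprod.inr (cj b⁻¹ g⁻¹)))⁻¹)
    ⟨a⁻¹, b⁻¹, g⁻¹, Or.inl rfl⟩
  have e1 : ∀ x : G, QuotientGroup.mk' (Subgroup.normalClosure (rels G)) (Monoid.Coprod.inl x) = ν₁ G x := fun _ => rfl
  have e2 : ∀ x : G, QuotientGroup.mk' (Subgroup.normalClosure (rels G)) (Monoid.Coprod.inr x) = ν₂ G x := fun _ => rfl
  simp only [cj, cm, map_mul, map_inv, mul_inv_eq_one, e1, e2] at h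
  simp only [commutatorElement_def, map_mul, map_inv]
  group at h ⊢
  exact h

/-- Abbreviations -/
def k1 (g : G) (x : nu G) : nu G := ν₁ G g * x * (ν₁ G g)⁻¹
def k2 (g : G) (x : nu G) : nu G := ν₂ G g * x * (ν₂ G g)⁻¹
def T (a b : G) : nu G := ⁅ν₁ G a, ν₂ G b⁆

def D : Subgroup (nu G) := closure {x | ∃ a b : G, x = T a b}

lemma T_mem (a b : G) : T a b ∈ (D : Subgroup (nu G)) := subset_closure ⟨a, b, rfl⟩

lemma k1_T (g a b : G) : k1 g (T a b) = T (g*a*g⁻¹) (g*b*g⁻¹) := eq1 a b g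

lemma eq2 (a b g : G) :
    ν₂ G g * ⁅ν₁ G a, ν₂ G b⁆ * (ν₂ G g)⁻¹ = ⁅ν₁ G (g*a*g⁻¹), ν₂ G (g*b*g⁻¹)⁆ := by
  have h := rel_one (G := G) (r := cj (cm (Monoid.Coprod.inl a⁻¹) (Monoid.Coprod.inr b⁻¹))
      (Monoid.Coprod.inl g⁻¹) *
      (cj (cm (Monoid.Coprod.inl a⁻¹) (Monoid.Coprod.inr b⁻¹)) (Monoid.Coprod.inr g⁻¹))⁻¹)
    ⟨a⁻¹, b⁻¹, g⁻¹, Or.inr rfl⟩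
  have e1 : ∀ x : G, QuotientGroup.mk' (Subgroup.normalClosure (rels G)) (Monoid.Coprod.inl x) = ν₁ G x := fun _ => rfl
  have e2 : ∀ x : G, QuotientGroup.mk' (Subgroup.normalClosure (rels G)) (Monoid.Coprod.inr x) = ν₂ G x := fun _ => rfl
  simp only [cj, cm, map_mul, map_inv, mul_inv_eq_one, e1, e2] at h
  have h2 := eq1 a b g
  simp only [commutatorElement_def, map_mul, map_inv] at h2 ⊢
  group at h h2 ⊢
  rw [← h, h2]

lemma k2_T (g a b : G) : k2 g (T a b) = T (g*a*g⁻¹) (g*b*g⁻¹) := eq2 a b g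

lemma k1_one (g : G) : k1 g (1 : nu G) = 1 := by simp [k1]
lemma k1_mul (g : G) (x y : nu G) : k1 g (x * y) = k1 g x * k1 g y := by simp [k1]
lemma k1_inv (g : G) (x : nu G) : k1 g x⁻¹ = (k1 g x)⁻¹ := by simp [k1]; group
lemma k1_comp (g g' : G) (x : nu G) : k1 g (k1 g' x) = k1 (g * g') x := by
  simp [k1, map_mul]; group
lemma k2_one (g : G) : k2 g (1 : nu G) = 1 := by simp [k2]
lemma k2_mul (g : G) (x y : nu G) : k2 g (x * y) = k2 g x * k2 g y := by simp [k2]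
lemma k2_inv (g : G) (x : nu G) : k2 g x⁻¹ = (k2 g x)⁻¹ := by simp [k2]; group

/-- conjugation by `ν₁ g` preserves `D` and agrees with conjugation by `ν₂ g` on `D`. -/
lemma D_conj {x : nu G} (hx : x ∈ (D : Subgroup (nu G))) (g : G) :
    k1 g x ∈ (D : Subgroup (nu G)) ∧ k2 g x = k1 g x := by
  induction hx using closure_induction with
  | mem y hy =>
    obtain ⟨a, b, rfl⟩ := hy
    exact ⟨by rw [k1_T]; exact T_mem _ _, (k2_T g a b).trans (k1_T g a b).symm⟩
  | one => exact ⟨by rw [k1_one]; exact D.one_mem, (k2_one g).trans (k1_one g).symm⟩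
  | mul y z _ _ hy hz =>
    exact ⟨by rw [k1_mul]; exact D.mul_mem hy.1 hz.1,
      by rw [k2_mul, k1_mul, hy.2, hz.2]⟩
  | inv y _ hy =>
    exact ⟨by rw [k1_inv]; exact D.inv_mem hy.1, by rw [k2_inv, k1_inv, hy.2]⟩

lemma conjT (g h : G) {d : nu G} (hd : d ∈ (D : Subgroup (nu G))) :
    T g h * d * (T g h)⁻¹ = k1 ⁅g, h⁆ d := by
  have e : T g h * d * (T g h)⁻¹ = k1 g (k2 h (k1 g⁻¹ (k2 h⁻¹ d))) := by
    simp only [T, k1, k2, commutatorElement_def, map_inv]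
    group
  rw [e, (D_conj hd h⁻¹).2, (D_conj (D_conj (D_conj hd h⁻¹).1 g⁻¹).1 h).2,
    k1_comp, k1_comp, k1_comp]
  rfl

lemma T_mul_left (g₁ g₂ h : G) : T (g₁ * g₂) h = k1 g₁ (T g₂ h) * T g₁ h := by
  simp only [T, k1, commutatorElement_def, map_mul]; group

lemma T_mul_right (g h₁ h₂ : G) : T g (h₁ * h₂) = T g h₁ * k2 h₁ (T g h₂) := by
  simp only [T, k2, commutatorElement_def, map_mul]; group

/-- Rocco's key identity: `[[g, h^φ], x] = [[g,h], x^φ]`. -/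
lemma key (g h x : G) : ⁅T g h, ν₁ G x⁆ = T ⁅g, h⁆ x := by
  have A1 : ⁅T g h, ν₁ G x⁆ = T g h * (k1 x (T g h))⁻¹ := by
    simp only [k1, commutatorElement_def]; group
  have A3 : k1 x (T g h) = (T g x)⁻¹ * T g (x * h) := by
    rw [T_mul_right, (D_conj (T_mem g h) x).2]; group
  have A4 : T g (x * h) = T g h * T (h * g * h⁻¹) x := by
    have hxh : x * h = h * (h⁻¹ * x * h) := by group
    rw [hxh, T_mul_right, (D_conj (T_mem g (h⁻¹ * x * h)) h).2, k1_T]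
    congr 2 <;> group
  have A5 : T g h * (T (h * g * h⁻¹) x)⁻¹ * (T g h)⁻¹ = k1 ⁅g, h⁆ (T (h * g * h⁻¹) x)⁻¹ :=
    conjT g h (D.inv_mem (T_mem _ _))
  have A7 : T g x = k1 ⁅g, h⁆ (T (h * g * h⁻¹) x) * T ⁅g, h⁆ x := by
    have hg : g = ⁅g, h⁆ * (h * g * h⁻¹) := by simp [commutatorElement_def]; group
    calc T g x = T (⁅g, h⁆ * (h * g * h⁻¹)) x := by rw [← hg]
    _ = k1 ⁅g, h⁆ (T (h * g * h⁻¹) x) * T ⁅g, h⁆ x := T_mul_left _ _ _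
  calc ⁅T g h, ν₁ G x⁆ = T g h * ((T g x)⁻¹ * (T g h * T (h * g * h⁻¹) x))⁻¹ := by
        rw [A1, A3, A4]
    _ = (T g h * (T (h * g * h⁻¹) x)⁻¹ * (T g h)⁻¹) * T g x := by group
    _ = k1 ⁅g, h⁆ (T (h * g * h⁻¹) x)⁻¹ * T g x := by rw [A5]
    _ = (k1 ⁅g, h⁆ (T (h * g * h⁻¹) x))⁻¹ * (k1 ⁅g, h⁆ (T (h * g * h⁻¹) x) * T ⁅g, h⁆ x) := by
        rw [← A7, k1_inv]
    _ = T ⁅g, h⁆ x := by group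

lemma keyB (g h x : G) : ⁅T g h, ν₂ G x⁆ = T ⁅g, h⁆ x := by
  have : ⁅T g h, ν₂ G x⁆ = T g h * (k2 x (T g h))⁻¹ := by
    simp only [k2, commutatorElement_def]; group
  rw [this, (D_conj (T_mem g h) x).2, ← key g h x]
  simp only [k1, commutatorElement_def]; group

/-! ### The series `KK n` -/

def Sset (n : ℕ) : Set (nu G) :=
  {x | ∃ u ∈ (⊤ : Subgroup G).lowerCentralSeries n, ∃ b : G, x = ⁅ν₁ G u, ν₂ G b⁆ ∨ x = ⁅ν₂ G u, ν₁ G b⁆}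

def SS : ℕ → Set (nu G)
  | 0 => Set.range (ν₁ G) ∪ Set.range (ν₂ G)
  | n+1 => (ν₁ G) '' ((⊤ : Subgroup G).lowerCentralSeries (n+1)) ∪ (ν₂ G) '' ((⊤ : Subgroup G).lowerCentralSeries (n+1)) ∪ Sset n

def KK (n : ℕ) : Subgroup (nu G) := closure (SS n)

lemma mem_KK (n : ℕ) {x : nu G} (h : x ∈ SS n) : x ∈ (KK n : Subgroup (nu G)) :=
  Subgroup.subset_closure h

lemma KK_zero : (KK 0 : Subgroup (nu G)) = ⊤ := by
  rw [eq_top_iff]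
  intro x _
  refine mem_of_gen _ (fun a => subset_closure (Or.inl ⟨a, rfl⟩))
    (fun a => subset_closure (Or.inr ⟨a, rfl⟩)) x

lemma Sset_mono {m n : ℕ} (h : m ≤ n) : (Sset n : Set (nu G)) ⊆ Sset m := by
  rintro x ⟨u, hu, b, hb⟩
  exact ⟨u, Subgroup.lowerCentralSeries_antitone _ h hu, b, hb⟩

lemma KK_succ_le (n : ℕ) : (KK (n+1) : Subgroup (nu G)) ≤ KK n := by
  cases n with
  | zero => rw [KK_zero]; exact le_top
  | succ m =>
    rw [KK, closure_le]
    rintro x ((⟨u, hu, rfl⟩ | ⟨u, hu, rfl⟩) | hx)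
    · exact mem_KK _ (Or.inl (Or.inl ⟨u, Subgroup.lowerCentralSeries_antitone _ (by omega) hu, rfl⟩))
    · exact mem_KK _ (Or.inl (Or.inr ⟨u, Subgroup.lowerCentralSeries_antitone _ (by omega) hu, rfl⟩))
    · exact mem_KK _ (Or.inr (Sset_mono (by omega) hx))

/-- helper to prove normality from conjugation by generators. -/
lemma normal_of_gen_conj (H : Subgroup (nu G))
    (h1 : ∀ a : G, ∀ x ∈ H, ν₁ G a * x * (ν₁ G a)⁻¹ ∈ H)
    (h2 : ∀ a : G, ∀ x ∈ H, ν₂ G a * x * (ν₂ G a)⁻¹ ∈ H) : H.Normal := by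
  have key : ∀ g : nu G, ∀ x ∈ H, g * x * g⁻¹ ∈ H := by
    let P : Subgroup (nu G) :=
      { carrier := {g | ∀ x ∈ H, g * x * g⁻¹ ∈ H ∧ g⁻¹ * x * g ∈ H}
        one_mem' := by intro x hx; exact ⟨by simpa using hx, by simpa using hx⟩
        mul_mem' := by
          rintro a b ha hb
          intro x hx
          constructor
          · have := (ha _ ((hb x hx).1)).1
            simpa [mul_assoc] using this
          · have := (hb _ ((ha x hx).2)).2
            simpa [mul_assoc] using this
        inv_mem' := by
          rintro a ha x hx
          refine ⟨by simpa using (ha x hx).2, by simpa using (ha x hx).1⟩ }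
    intro g
    have hg : g ∈ P := by
      refine mem_of_gen P (fun a x hx => ?_) (fun a x hx => ?_) g
      · refine ⟨h1 a x hx, ?_⟩
        have := h1 a⁻¹ x hx
        simpa [map_inv] using this
      · refine ⟨h2 a x hx, ?_⟩
        have := h2 a⁻¹ x hx
        simpa [map_inv] using this
    exact fun x hx => (hg x hx).1
  exact ⟨fun x hx g => key g x hx⟩

lemma conj_mem_KK_succ (n : ℕ) :
    (∀ a : G, ∀ x ∈ SS (n+1), ν₁ G a * x * (ν₁ G a)⁻¹ ∈ (KK (n+1) : Subgroup (nu G))) ∧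
    (∀ a : G, ∀ x ∈ SS (n+1), ν₂ G a * x * (ν₂ G a)⁻¹ ∈ (KK (n+1) : Subgroup (nu G))) := by
  constructor
  · rintro a x ((⟨u, hu, rfl⟩ | ⟨u, hu, rfl⟩) | ⟨u, hu, b, (rfl | rfl)⟩)
    · refine mem_KK _ (Or.inl (Or.inl ⟨a*u*a⁻¹, ?_, ?_⟩))
      · exact (lowerCentralSeries_normal _ (n+1)).conj_mem u hu a
      · simp [map_mul, map_inv]
    · -- conj of ν₂ u by ν₁ a
      have e : ν₁ G a * ν₂ G u * (ν₁ G a)⁻¹ = ⁅ν₁ G a, ν₂ G u⁆ * ν₂ G u := by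
        simp [commutatorElement_def]
      rw [e]
      refine Subgroup.mul_mem _ ?_ (mem_KK _ (Or.inl (Or.inr ⟨u, hu, rfl⟩)))
      rw [show ⁅ν₁ G a, ν₂ G u⁆ = (⁅ν₂ G u, ν₁ G a⁆)⁻¹ by rw [commutatorElement_inv]]
      exact Subgroup.inv_mem _ (mem_KK _ (Or.inr
        ⟨u, Subgroup.lowerCentralSeries_antitone _ (by omega) hu, a, Or.inr rfl⟩))
    · rw [show ν₁ G a * ⁅ν₁ G u, ν₂ G b⁆ * (ν₁ G a)⁻¹ = k1 a (T u b) from rfl, k1_T]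
      exact mem_KK _ (Or.inr ⟨a*u*a⁻¹, (lowerCentralSeries_normal _ n).conj_mem u hu a,
        a*b*a⁻¹, Or.inl rfl⟩)
    · have e : ν₁ G a * ⁅ν₂ G u, ν₁ G b⁆ * (ν₁ G a)⁻¹ = (k1 a (T b u))⁻¹ := by
        simp only [k1, T, commutatorElement_def, map_mul, map_inv]; group
      rw [e, k1_T, T, commutatorElement_inv]
      exact mem_KK _ (Or.inr
        ⟨a*u*a⁻¹, (lowerCentralSeries_normal _ n).conj_mem u hu a, a*b*a⁻¹, Or.inr rfl⟩)
  · rintro a x ((⟨u, hu, rfl⟩ | ⟨u, hu, rfl⟩) | ⟨u, hu, b, (rfl | rfl)⟩)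
    · have e : ν₂ G a * ν₁ G u * (ν₂ G a)⁻¹ = ⁅ν₂ G a, ν₁ G u⁆ * ν₁ G u := by
        simp [commutatorElement_def]
      rw [e]
      refine Subgroup.mul_mem _ ?_ (mem_KK _ (Or.inl (Or.inl ⟨u, hu, rfl⟩)))
      rw [show ⁅ν₂ G a, ν₁ G u⁆ = (⁅ν₁ G u, ν₂ G a⁆)⁻¹ by rw [commutatorElement_inv]]
      exact Subgroup.inv_mem _ (mem_KK _ (Or.inr
        ⟨u, Subgroup.lowerCentralSeries_antitone _ (by omega) hu, a, Or.inl rfl⟩))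
    · refine mem_KK _ (Or.inl (Or.inr ⟨a*u*a⁻¹, ?_, ?_⟩))
      · exact (lowerCentralSeries_normal _ (n+1)).conj_mem u hu a
      · simp [map_mul, map_inv]
    · rw [show ν₂ G a * ⁅ν₁ G u, ν₂ G b⁆ * (ν₂ G a)⁻¹ = k2 a (T u b) from rfl, k2_T]
      exact mem_KK _ (Or.inr ⟨a*u*a⁻¹, (lowerCentralSeries_normal _ n).conj_mem u hu a,
        a*b*a⁻¹, Or.inl rfl⟩)
    · have e : ν₂ G a * ⁅ν₂ G u, ν₁ G b⁆ * (ν₂ G a)⁻¹ = (k2 a (T b u))⁻¹ := by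
        simp only [k2, T, commutatorElement_def, map_mul, map_inv]; group
      rw [e, k2_T, T, commutatorElement_inv]
      exact mem_KK _ (Or.inr
        ⟨a*u*a⁻¹, (lowerCentralSeries_normal _ n).conj_mem u hu a, a*b*a⁻¹, Or.inr rfl⟩)

instance KK_normal (n : ℕ) : (KK n : Subgroup (nu G)).Normal := by
  cases n with
  | zero => rw [KK_zero]; infer_instance
  | succ m =>
    refine normal_of_gen_conj _ (fun a x hx => ?_) (fun a x hx => ?_)
    · induction hx using closure_induction with
      | mem y hy => exact (conj_mem_KK_succ m).1 a y hy
      | one => simpa using Subgroup.one_mem _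
      | mul y z _ _ hy hz =>
        have e : ν₁ G a * (y * z) * (ν₁ G a)⁻¹ =
            (ν₁ G a * y * (ν₁ G a)⁻¹) * (ν₁ G a * z * (ν₁ G a)⁻¹) := by group
        rw [e]; exact Subgroup.mul_mem _ hy hz
      | inv y _ hy =>
        have e : ν₁ G a * y⁻¹ * (ν₁ G a)⁻¹ = (ν₁ G a * y * (ν₁ G a)⁻¹)⁻¹ := by group
        rw [e]; exact Subgroup.inv_mem _ hy
    · induction hx using closure_induction with
      | mem y hy => exact (conj_mem_KK_succ m).2 a y hy
      | one => simpa using Subgroup.one_mem _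
      | mul y z _ _ hy hz =>
        have e : ν₂ G a * (y * z) * (ν₂ G a)⁻¹ =
            (ν₂ G a * y * (ν₂ G a)⁻¹) * (ν₂ G a * z * (ν₂ G a)⁻¹) := by group
        rw [e]; exact Subgroup.mul_mem _ hy hz
      | inv y _ hy =>
        have e : ν₂ G a * y⁻¹ * (ν₂ G a)⁻¹ = (ν₂ G a * y * (ν₂ G a)⁻¹)⁻¹ := by group
        rw [e]; exact Subgroup.inv_mem _ hy

/-- commutators of closures land in a normal subgroup if the generators' commutators do. -/
lemma commutator_closure_le (Sa Sb : Set (nu G)) (N : Subgroup (nu G)) [hN : N.Normal]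
    (h : ∀ s ∈ Sa, ∀ t ∈ Sb, ⁅s, t⁆ ∈ N) : ⁅closure Sa, closure Sb⁆ ≤ N := by
  rw [commutator_le]
  have step1 : ∀ s ∈ Sa, ∀ y ∈ closure Sb, ⁅s, y⁆ ∈ N := by
    intro s hs y hy
    induction hy using closure_induction with
    | mem t ht => exact h s hs t ht
    | one => simpa using N.one_mem
    | mul y z _ _ hy hz =>
      have e : ⁅s, y * z⁆ = ⁅s, y⁆ * (y * ⁅s, z⁆ * y⁻¹) := by
        simp only [commutatorElement_def]; group
      rw [e]; exact N.mul_mem hy (hN.conj_mem _ hz y)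
    | inv y _ hy =>
      have e : ⁅s, y⁻¹⁆ = y⁻¹ * ⁅s, y⁆⁻¹ * y := by
        simp only [commutatorElement_def]; group
      rw [e]; simpa using (Subgroup.Normal.conj_mem hN _ (N.inv_mem hy) y⁻¹)
  intro x hx y hy
  induction hx using closure_induction with
  | mem s hs => exact step1 s hs y hy
  | one => simpa using N.one_mem
  | mul s t _ _ hs ht =>
    have e : ⁅s * t, y⁆ = (s * ⁅t, y⁆ * s⁻¹) * ⁅s, y⁆ := by
      simp only [commutatorElement_def]; group
    rw [e]; exact N.mul_mem (hN.conj_mem _ ht s) hs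
  | inv s _ hs =>
    have e : ⁅s⁻¹, y⁆ = s⁻¹ * ⁅s, y⁆⁻¹ * s := by
      simp only [commutatorElement_def]; group
    rw [e]; simpa using hN.conj_mem _ (N.inv_mem hs) s⁻¹

lemma lcs_succ_eq (H : Type*) [Group H] (n : ℕ) :
    (⊤ : Subgroup H).lowerCentralSeries (n+1) = ⁅(⊤ : Subgroup H).lowerCentralSeries n, (⊤ : Subgroup H)⁆ := rfl

lemma mem_lcs_succ {n : ℕ} {u a : G} (hu : u ∈ (⊤ : Subgroup G).lowerCentralSeries n) :
    ⁅u, a⁆ ∈ (⊤ : Subgroup G).lowerCentralSeries (n+1) := by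
  rw [lcs_succ_eq G]
  exact commutator_mem_commutator hu (mem_top a)

lemma mem_lcs_succ' {n : ℕ} {u a : G} (hu : u ∈ (⊤ : Subgroup G).lowerCentralSeries n) :
    ⁅a, u⁆ ∈ (⊤ : Subgroup G).lowerCentralSeries (n+1) := by
  rw [show ⁅a, u⁆ = ⁅u, a⁆⁻¹ by rw [commutatorElement_inv]]
  exact Subgroup.inv_mem _ (mem_lcs_succ hu)

lemma main_step (n : ℕ) : ⁅(KK n : Subgroup (nu G)), (KK 0 : Subgroup (nu G))⁆ ≤ KK (n+1) := by
  refine commutator_closure_le _ _ _ (fun s hs t ht => ?_)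
  cases n with
  | zero =>
    rcases hs with ⟨a, rfl⟩ | ⟨a, rfl⟩ <;> rcases ht with ⟨b, rfl⟩ | ⟨b, rfl⟩
    · rw [← map_commutatorElement]
      exact mem_KK _ (Or.inl (Or.inl ⟨⁅a, b⁆, mem_lcs_succ (mem_top a), rfl⟩))
    · exact mem_KK _ (Or.inr ⟨a, mem_top a, b, Or.inl rfl⟩)
    · exact mem_KK _ (Or.inr ⟨a, mem_top a, b, Or.inr rfl⟩)
    · rw [← map_commutatorElement]
      exact mem_KK _ (Or.inl (Or.inr ⟨⁅a, b⁆, mem_lcs_succ (mem_top a), rfl⟩))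
  | succ m =>
    rcases hs with (⟨u, hu, rfl⟩ | ⟨u, hu, rfl⟩) | ⟨u, hu, b, (rfl | rfl)⟩ <;>
      rcases ht with ⟨a, rfl⟩ | ⟨a, rfl⟩
    · rw [← map_commutatorElement]
      exact mem_KK _ (Or.inl (Or.inl ⟨⁅u, a⁆, mem_lcs_succ hu, rfl⟩))
    · exact mem_KK _ (Or.inr ⟨u, hu, a, Or.inl rfl⟩)
    · exact mem_KK _ (Or.inr ⟨u, hu, a, Or.inr rfl⟩)
    · rw [← map_commutatorElement]
      exact mem_KK _ (Or.inl (Or.inr ⟨⁅u, a⁆, mem_lcs_succ hu, rfl⟩))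
    · rw [show (⁅ν₁ G u, ν₂ G b⁆ : nu G) = T u b from rfl, key]
      exact mem_KK _ (Or.inr ⟨⁅u, b⁆, mem_lcs_succ hu, a, Or.inl rfl⟩)
    · rw [show (⁅ν₁ G u, ν₂ G b⁆ : nu G) = T u b from rfl, keyB]
      exact mem_KK _ (Or.inr ⟨⁅u, b⁆, mem_lcs_succ hu, a, Or.inl rfl⟩)
    · have e : (⁅ν₂ G u, ν₁ G b⁆ : nu G) = (T b u)⁻¹ := by
        rw [T, commutatorElement_inv]
      have e2 : ⁅(T b u)⁻¹, ν₁ G a⁆ = (T b u)⁻¹ * ⁅T b u, ν₁ G a⁆⁻¹ * T b u := by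
        simp only [commutatorElement_def]; group
      rw [e, e2, key]
      have hmem : T ⁅b, u⁆ a ∈ (KK (m+2) : Subgroup (nu G)) :=
        mem_KK _ (Or.inr ⟨⁅b, u⁆, mem_lcs_succ' hu, a, Or.inl rfl⟩)
      have := (KK_normal (m+2)).conj_mem _ (Subgroup.inv_mem _ hmem) (T b u)⁻¹
      simpa [mul_assoc] using this
    · have e : (⁅ν₂ G u, ν₁ G b⁆ : nu G) = (T b u)⁻¹ := by
        rw [T, commutatorElement_inv]
      have e2 : ⁅(T b u)⁻¹, ν₂ G a⁆ = (T b u)⁻¹ * ⁅T b u, ν₂ G a⁆⁻¹ * T b u := by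
        simp only [commutatorElement_def]; group
      rw [e, e2, keyB]
      have hmem : T ⁅b, u⁆ a ∈ (KK (m+2) : Subgroup (nu G)) :=
        mem_KK _ (Or.inr ⟨⁅b, u⁆, mem_lcs_succ' hu, a, Or.inl rfl⟩)
      have := (KK_normal (m+2)).conj_mem _ (Subgroup.inv_mem _ hmem) (T b u)⁻¹
      simpa [mul_assoc] using this

lemma lcs_le_KK (n : ℕ) : (⊤ : Subgroup (nu G)).lowerCentralSeries n ≤ KK n := by
  induction n with
  | zero => rw [KK_zero]; exact le_top
  | succ m ih =>
    calc (⊤ : Subgroup (nu G)).lowerCentralSeries (m+1) = ⁅(⊤ : Subgroup (nu G)).lowerCentralSeries m, ⊤⁆ := rfl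
      _ ≤ ⁅(KK m : Subgroup (nu G)), (KK 0 : Subgroup (nu G))⁆ := by
          apply commutator_mono ih
          rw [KK_zero]
      _ ≤ KK (m+1) := main_step m

lemma T_one_left (b : G) : T 1 b = (1 : nu G) := by simp [T, commutatorElement_def]
lemma T_one_right (b : G) : T b 1 = (1 : nu G) := by simp [T, commutatorElement_def]

lemma mk1 {N : Subgroup (nu G)} [N.Normal] {x : nu G} (h : x ∈ N) :
    QuotientGroup.mk' N x = 1 :=
  (QuotientGroup.eq_one_iff x).mpr h

lemma mk1' {N : Subgroup (nu G)} [N.Normal] {x : nu G} (h : QuotientGroup.mk' N x = 1) :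
    x ∈ N :=
  (QuotientGroup.eq_one_iff x).mp h

lemma pow_mk1 (n : ℕ) {u : G} (hu : u ∈ (⊤ : Subgroup G).lowerCentralSeries n) (b : G) (m : ℕ) :
    (QuotientGroup.mk' (KK (n+2)) (T u b)) ^ m = QuotientGroup.mk' (KK (n+2)) (T (u^m) b) := by
  induction m with
  | zero => simp [T_one_left]
  | succ m ih =>
    have hupow : u ^ (m+1) = u * u ^ m := by rw [pow_succ']
    have he : T (u * u ^ m) b = (⁅ν₁ G u, T (u^m) b⁆ * T (u^m) b) * T u b := by
      rw [T_mul_left]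
      congr 1
      simp only [k1, commutatorElement_def]
      group
    have hcomm1 : QuotientGroup.mk' (KK (n+2)) ⁅ν₁ G u, T (u^m) b⁆ = 1 := by
      rw [show (⁅ν₁ G u, T (u^m) b⁆ : nu G) = ⁅T (u^m) b, ν₁ G u⁆⁻¹ by
        rw [commutatorElement_inv], key]
      exact mk1 <| Subgroup.inv_mem _ (mem_KK _ (Or.inr
        ⟨⁅u^m, b⁆, mem_lcs_succ (Subgroup.pow_mem _ hu m), u, Or.inl rfl⟩))
    rw [pow_succ, ih, hupow, he, map_mul, map_mul, hcomm1, one_mul]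

lemma pow_mk2 (n : ℕ) {u : G} (hu : u ∈ (⊤ : Subgroup G).lowerCentralSeries n) (b : G) (m : ℕ) :
    (QuotientGroup.mk' (KK (n+2)) (T b u)) ^ m = QuotientGroup.mk' (KK (n+2)) (T b (u^m)) := by
  induction m with
  | zero => simp [T_one_right]
  | succ m ih =>
    have hupow : u ^ (m+1) = u * u ^ m := by rw [pow_succ']
    have he : T b (u * u ^ m) = T b u * (⁅ν₂ G u, T b (u^m)⁆ * T b (u^m)) := by
      rw [T_mul_right]
      congr 1
      simp only [k2, commutatorElement_def]
      group
    have hcomm1 : QuotientGroup.mk' (KK (n+2)) ⁅ν₂ G u, T b (u^m)⁆ = 1 := by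
      rw [show (⁅ν₂ G u, T b (u^m)⁆ : nu G) = ⁅T b (u^m), ν₂ G u⁆⁻¹ by
        rw [commutatorElement_inv], keyB]
      exact mk1 <| Subgroup.inv_mem _ (mem_KK _ (Or.inr
        ⟨⁅b, u^m⁆, mem_lcs_succ' (Subgroup.pow_mem _ hu m), u, Or.inl rfl⟩))
    rw [pow_succ', ih, hupow, he, map_mul, map_mul, hcomm1, one_mul]

lemma SS_finite [Finite G] (n : ℕ) : (SS n : Set (nu G)).Finite := by
  cases n with
  | zero => exact (Set.finite_range _).union (Set.finite_range _)
  | succ m =>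
    refine (((Set.toFinite _).image _).union ((Set.toFinite _).image _)).union ?_
    have hsub : (Sset m : Set (nu G)) ⊆
        Set.range (fun q : G × G => ⁅ν₁ G q.1, ν₂ G q.2⁆) ∪
        Set.range (fun q : G × G => ⁅ν₂ G q.1, ν₁ G q.2⁆) := by
      rintro x ⟨u, _, b, (rfl | rfl)⟩
      · exact Or.inl ⟨(u, b), rfl⟩
      · exact Or.inr ⟨(u, b), rfl⟩
    exact Set.Finite.subset ((Set.finite_range _).union (Set.finite_range _)) hsub

lemma quot_fin {p : ℕ} (hp : p.Prime) [Finite G] (hG : IsPGroup p G) (n : ℕ) :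
    Finite (nu G ⧸ (KK n : Subgroup (nu G))) ∧
      ∀ x : nu G ⧸ (KK n : Subgroup (nu G)), ∃ k, x ^ p ^ k = 1 := by
  induction n with
  | zero =>
    have hsub : ∀ x y : nu G ⧸ (KK 0 : Subgroup (nu G)), x = y := by
      intro x y
      obtain ⟨a, rfl⟩ := QuotientGroup.mk'_surjective _ x
      obtain ⟨b, rfl⟩ := QuotientGroup.mk'_surjective _ y
      apply QuotientGroup.eq.mpr
      rw [KK_zero]; exact mem_top _
    haveI : Subsingleton (nu G ⧸ (KK 0 : Subgroup (nu G))) := ⟨hsub⟩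
    exact ⟨Finite.of_subsingleton, fun x => ⟨0, hsub _ _⟩⟩
  | succ n ih =>
    obtain ⟨hfin, htor⟩ := ih
    set mkq := QuotientGroup.mk' (KK (n+1) : Subgroup (nu G)) with hmkq
    have hle : (KK (n+1) : Subgroup (nu G)) ≤ Subgroup.comap (MonoidHom.id (nu G)) (KK n) :=
      KK_succ_le n
    set π : (nu G ⧸ (KK (n+1) : Subgroup (nu G))) →* (nu G ⧸ (KK n : Subgroup (nu G))) :=
      QuotientGroup.map _ _ (MonoidHom.id (nu G)) hle with hπ
    have hπ_mk : ∀ x : nu G, π (mkq x) = QuotientGroup.mk' (KK n) x := fun x => rfl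
    set H : Subgroup (nu G ⧸ (KK (n+1) : Subgroup (nu G))) := (KK n : Subgroup (nu G)).map mkq
      with hH
    have hHcl : H = closure (mkq '' SS n) := by
      rw [hH]
      exact MonoidHom.map_closure _ _
    have hcomm : ∀ x ∈ H, ∀ y ∈ H, x * y = y * x := by
      rintro _ ⟨a, ha, rfl⟩ _ ⟨b, hb, rfl⟩
      have h1 : ⁅a, b⁆ ∈ (KK (n+1) : Subgroup (nu G)) :=
        main_step n (commutator_mem_commutator ha (by rw [KK_zero]; exact mem_top b))
      have h2 : (⁅mkq a, mkq b⁆ : nu G ⧸ (KK (n+1) : Subgroup (nu G))) = 1 := by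
        rw [← map_commutatorElement]
        exact mk1 h1
      exact commutatorElement_eq_one_iff_mul_comm.mp h2
    have tors : ∀ x ∈ H, ∃ k : ℕ, x ^ p ^ k = 1 := by
      intro x hx
      rw [hHcl] at hx
      induction hx using closure_induction with
      | mem y hy =>
        obtain ⟨s, hs, rfl⟩ := hy
        cases n with
        | zero =>
          rcases hs with ⟨u, rfl⟩ | ⟨u, rfl⟩ <;>
          · obtain ⟨k, hk⟩ := hG u
            exact ⟨k, by rw [← map_pow, ← map_pow, hk, map_one, map_one]⟩
        | succ m =>
          rcases hs with (⟨u, hu, rfl⟩ | ⟨u, hu, rfl⟩) | ⟨u, hu, b, (rfl | rfl)⟩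
          · obtain ⟨k, hk⟩ := hG u
            exact ⟨k, by rw [← map_pow, ← map_pow, hk, map_one, map_one]⟩
          · obtain ⟨k, hk⟩ := hG u
            exact ⟨k, by rw [← map_pow, ← map_pow, hk, map_one, map_one]⟩
          · obtain ⟨k, hk⟩ := hG u
            exact ⟨k, by
              rw [show (⁅ν₁ G u, ν₂ G b⁆ : nu G) = T u b from rfl, pow_mk1 m hu b, hk,
                T_one_left, map_one]⟩
          · obtain ⟨k, hk⟩ := hG u
            refine ⟨k, ?_⟩
            rw [show (⁅ν₂ G u, ν₁ G b⁆ : nu G) = (T b u)⁻¹ by rw [T, commutatorElement_inv]]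
            rw [map_inv, inv_pow, pow_mk2 m hu b, hk, T_one_right, map_one, inv_one]
      | one => exact ⟨0, by simp⟩
      | mul y z hy hz ihy ihz =>
        obtain ⟨ky, hky⟩ := ihy
        obtain ⟨kz, hkz⟩ := ihz
        have hc : Commute y z := hcomm y (by rw [hHcl]; exact hy) z (by rw [hHcl]; exact hz)
        refine ⟨ky + kz, ?_⟩
        have e1 : y ^ p ^ (ky + kz) = (y ^ p ^ ky) ^ p ^ kz := by rw [← pow_mul, ← pow_add]
        have e2 : z ^ p ^ (ky + kz) = (z ^ p ^ kz) ^ p ^ ky := by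
          rw [← pow_mul, ← pow_add, Nat.add_comm kz ky]
        rw [hc.mul_pow, e1, e2, hky, hkz, one_pow, one_pow, one_mul]
      | inv y hy ihy =>
        obtain ⟨k, hk⟩ := ihy
        exact ⟨k, by rw [inv_pow, hk, inv_one]⟩
    haveI hfinH : Finite ↥H := by
      haveI : Finite ↥(mkq '' SS n) := ((SS_finite n).image _).to_subtype
      haveI : Group.FG ↥H := by rw [hHcl]; infer_instance
      letI : CommGroup ↥H :=
        { (inferInstance : Group ↥H) with
          mul_comm := fun a b => Subtype.ext (hcomm a a.2 b b.2) }
      refine CommGroup.finite_of_fg_torsion ↥H (fun x => ?_)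
      obtain ⟨k, hk⟩ := tors x.1 x.2
      refine isOfFinOrder_iff_pow_eq_one.mpr ⟨p^k, pow_pos hp.pos k, ?_⟩
      exact Subtype.ext (by rw [SubmonoidClass.coe_pow]; exact hk)
    have hker : π.ker = H := by
      apply le_antisymm
      · intro q hq
        obtain ⟨x, rfl⟩ := QuotientGroup.mk'_surjective _ q
        have h1 : QuotientGroup.mk' (KK n) x = 1 := hq
        exact ⟨x, mk1' h1, rfl⟩
      · rintro _ ⟨x, hx, rfl⟩
        show π (mkq x) = 1
        rw [hπ_mk]
        exact mk1 hx
    haveI : Finite ↥π.range := Subtype.finite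
    haveI hq1 : Finite ((nu G ⧸ (KK (n+1) : Subgroup (nu G))) ⧸ π.ker) :=
      Finite.of_equiv _ (QuotientGroup.quotientKerEquivRange π).symm.toEquiv
    haveI hq2 : Finite ((nu G ⧸ (KK (n+1) : Subgroup (nu G))) ⧸ H) := by
      rw [← hker]; exact hq1
    constructor
    · exact Finite.of_equiv _ (Subgroup.groupEquivQuotientProdSubgroup (s := H)).symm
    · intro x
      obtain ⟨k, hk⟩ := htor (π x)
      have hx : x ^ p ^ k ∈ H := by
        rw [← hker]
        show π (x ^ p ^ k) = 1
        rw [map_pow, hk]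
      obtain ⟨j, hj⟩ := tors _ hx
      refine ⟨k + j, ?_⟩
      have e1 : x ^ p ^ (k + j) = (x ^ p ^ k) ^ p ^ j := by rw [← pow_mul, ← pow_add]
      rw [e1, hj]

end RoccoProof

open Rocco in
/-- If `G` is a finite `p`-group of nilpotency class `c`, then `ν(G)` is a finite `p`-group of
nilpotency class at most `c + 1`. -/
theorem nu_pGroup_class_le {p : ℕ} (hp : p.Prime) (G : Type*) [Group G] [Finite G]
    (hG : IsPGroup p G) (hnil : Group.IsNilpotent G) :
    Finite (nu G) ∧ IsPGroup p (nu G) ∧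
      ∃ hn : Group.IsNilpotent (nu G),
        Group.nilpotencyClass (nu G) ≤ Group.nilpotencyClass G + 1 := by
  classical
  haveI := hnil
  set c := Group.nilpotencyClass G with hc
  open RoccoProof Subgroup in
  -- the series vanishes at c+1
  have hbot : (RoccoProof.KK (c+1) : Subgroup (nu G)) = ⊥ := by
    have hΓ : (⊤ : Subgroup G).lowerCentralSeries c = ⊥ := Subgroup.lowerCentralSeries_nilpotencyClass
    apply le_bot_iff.mp
    rw [RoccoProof.KK, Subgroup.closure_le]
    rintro x ((⟨u, hu, rfl⟩ | ⟨u, hu, rfl⟩) | ⟨u, hu, b, (rfl | rfl)⟩)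
    · have : u = 1 := by
        have := Subgroup.lowerCentralSeries_antitone _ (Nat.le_succ c) hu
        rw [hΓ] at this; simpa using this
      simp [this]
    · have : u = 1 := by
        have := Subgroup.lowerCentralSeries_antitone _ (Nat.le_succ c) hu
        rw [hΓ] at this; simpa using this
      simp [this]
    · have : u = 1 := by rw [hΓ] at hu; simpa using hu
      simp [this, commutatorElement_def]
    · have : u = 1 := by rw [hΓ] at hu; simpa using hu
      simp [this, commutatorElement_def]
  have hlcs : (⊤ : Subgroup (nu G)).lowerCentralSeries (c+1) = ⊥ :=
    le_bot_iff.mp (hbot ▸ RoccoProof.lcs_le_KK (c+1))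
  haveI hn : Group.IsNilpotent (nu G) := Subgroup.nilpotent_iff_lowerCentralSeries.mpr ⟨c+1, hlcs⟩
  -- finiteness and p-group property via the quotient by `KK (c+1) = ⊥`
  obtain ⟨hfin, htor⟩ := RoccoProof.quot_fin (G := G) hp hG (c+1)
  have hinj : Function.Injective (QuotientGroup.mk' (RoccoProof.KK (c+1) : Subgroup (nu G))) := by
    rw [← MonoidHom.ker_eq_bot_iff, QuotientGroup.ker_mk']
    exact hbot
  refine ⟨Finite.of_injective _ hinj, ?_, hn, ?_⟩
  · intro g
    obtain ⟨k, hk⟩ := htor (QuotientGroup.mk' _ g)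
    exact ⟨k, hinj (by rw [map_pow, hk, map_one])⟩
  · exact (Subgroup.lowerCentralSeries_eq_bot_iff_nilpotencyClass_le).mp hlcs
end
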